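/- Let 𝒢=(G,λ) be a temporal graph of lifetime T and let Δ ≤ T. For every Δ-template 𝒮 with respect to lifetime T and every choice, for each interval W ∈ 𝒮, of a Δ-temporal matching M_W of 𝒢|_W, the union ∪_{W∈𝒮} M_W is a Δ-temporal matching of 𝒢; in particular, μ_Δ(𝒢) ≥ Σ_{W∈𝒮} μ_Δ(𝒢|_W) for every Δ-template 𝒮. -/

import Mathlib

variable {V : Type*}

/-- The underlying (static) graph of a temporal graph given by its time-labeling. -/
def ugraph (lab : Sym2 V → Finset ℕ) : SimpleGraph V where
  Adj x y := x ≠ y ∧ (lab s(x, y)).Nonempty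
  symm := by
    constructor
    intro x y h
    exact ⟨h.1.symm, by rw [Sym2.eq_swap]; exact h.2⟩
  loopless := by constructor; intro x h; exact h.1 rfl

/-- `(e, t)` is a time edge of the temporal graph given by `lab`. -/
def IsTimeEdge (lab : Sym2 V → Finset ℕ) (p : Sym2 V × ℕ) : Prop :=
  ¬ p.1.IsDiag ∧ p.2 ∈ lab p.1

/-- Two time edges are Δ-independent: edges disjoint or labels at least Δ apart. -/
def DIndep (Δ : ℕ) (p q : Sym2 V × ℕ) : Prop :=
  (∀ v, v ∈ p.1 → v ∉ q.1) ∨ Δ ≤ ((p.2 : ℤ) - (q.2 : ℤ)).natAbs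

/-- A Δ-temporal matching. -/
def IsTM (lab : Sym2 V → Finset ℕ) (Δ : ℕ) (M : Finset (Sym2 V × ℕ)) : Prop :=
  (∀ p ∈ M, IsTimeEdge lab p) ∧ ∀ p ∈ M, ∀ q ∈ M, p ≠ q → DIndep Δ p q

/-- μ_Δ: maximum cardinality of a Δ-temporal matching. -/
noncomputable def tmu (lab : Sym2 V → Finset ℕ) (Δ : ℕ) : ℕ :=
  sSup {k | ∃ M : Finset (Sym2 V × ℕ), IsTM lab Δ M ∧ M.card = k}

/-- The temporal graph has lifetime `T`. -/
def HasLifetime (lab : Sym2 V → Finset ℕ) (T : ℕ) : Prop :=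
  (∀ e, ∀ t ∈ lab e, 1 ≤ t ∧ t ≤ T) ∧ ∃ e : Sym2 V, ¬ e.IsDiag ∧ T ∈ lab e

/-- The snapshot at time `t`. -/
def tsnapshot (lab : Sym2 V → Finset ℕ) (t : ℕ) : SimpleGraph V where
  Adj x y := x ≠ y ∧ t ∈ lab s(x, y)
  symm := by
    constructor
    intro x y h
    exact ⟨h.1.symm, by rw [Sym2.eq_swap]; exact h.2⟩
  loopless := by constructor; intro x h; exact h.1 rfl

/-- 𝒢|_S : keep only time edges with label in `S`. -/
def trestrict (lab : Sym2 V → Finset ℕ) (S : Finset ℕ) : Sym2 V → Finset ℕ :=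
  fun e => lab e ∩ S

/-- A finite matching of a static graph. -/
def IsMatchingF (G : SimpleGraph V) (R : Finset (Sym2 V)) : Prop :=
  (∀ e ∈ R, e ∈ G.edgeSet) ∧ ∀ e ∈ R, ∀ e' ∈ R, e ≠ e' → ∀ v, v ∈ e → v ∉ e'

/-- ν(G): maximum cardinality of a matching. -/
noncomputable def matchNum (G : SimpleGraph V) : ℕ :=
  sSup {k | ∃ R : Finset (Sym2 V), IsMatchingF G R ∧ R.card = k}

/-- An independent set of a static graph. -/
def IsIndepF (G : SimpleGraph V) (S : Finset V) : Prop :=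
  ∀ u ∈ S, ∀ v ∈ S, ¬ G.Adj u v

/-- α(G): maximum cardinality of an independent set. -/
noncomputable def indepNum (G : SimpleGraph V) : ℕ :=
  sSup {k | ∃ S : Finset V, IsIndepF G S ∧ S.card = k}

/-- The Δ-temporal line graph: vertices are the time edges, two distinct time edges are
adjacent iff the edges share a vertex and the labels are less than Δ apart. -/
def tline (lab : Sym2 V → Finset ℕ) (Δ : ℕ) :
    SimpleGraph {p : Sym2 V × ℕ // IsTimeEdge lab p} where
  Adj p q := p ≠ q ∧ (∃ v, v ∈ p.1.1 ∧ v ∈ q.1.1) ∧ ((p.1.2 : ℤ) - (q.1.2 : ℤ)).natAbs < Δ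
  symm := by
    constructor
    rintro p q ⟨hne, ⟨v, hv1, hv2⟩, hlt⟩
    exact ⟨hne.symm, ⟨v, hv2, hv1⟩, by omega⟩
  loopless := by constructor; rintro p ⟨hne, -⟩; exact hne rfl

/-- An interval `I = [I.1, I.2] ⊆ [T]` is a Δ-window (length exactly Δ) or a partial
Δ-window (length at most Δ-1, and starting at slot 1 or ending at slot T). -/
def IsWindow (Δ T : ℕ) (I : ℕ × ℕ) : Prop :=
  1 ≤ I.1 ∧ I.1 ≤ I.2 ∧ I.2 ≤ T ∧
  (I.2 + 1 = I.1 + Δ ∨ (I.2 + 1 < I.1 + Δ ∧ (I.1 = 1 ∨ I.2 = T)))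

/-- A family of pairwise disjoint Δ-windows or partial Δ-windows in `[T]` such that
any two consecutive members are at distance exactly `Δ - 1` from each other
(the distance between `[a₁,b₁]` and `[a₂,b₂]` with `b₁ < a₂` being `a₂ - b₁ - 1`). -/
def GoodFamily (Δ T : ℕ) (S : Finset (ℕ × ℕ)) : Prop :=
  (∀ I ∈ S, IsWindow Δ T I) ∧
  (∀ I ∈ S, ∀ J ∈ S, I ≠ J → (I.2 < J.1 ∨ J.2 < I.1)) ∧
  (∀ I ∈ S, ∀ J ∈ S, I.2 < J.1 → (∀ K ∈ S, ¬(I.2 < K.1 ∧ K.2 < J.1)) → J.1 = I.2 + Δ)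

/-- A Δ-template with respect to lifetime `T`: a maximal such family. -/
def IsTemplate (Δ T : ℕ) (S : Finset (ℕ × ℕ)) : Prop :=
  GoodFamily Δ T S ∧ ∀ S' : Finset (ℕ × ℕ), S ⊆ S' → GoodFamily Δ T S' → S' = S

/-- Any two intervals of a good family that follow each other are at least Δ apart. -/
lemma gap_lemma {Δ T : ℕ} {S : Finset (ℕ × ℕ)} (hG : GoodFamily Δ T S)
    {I J : ℕ × ℕ} (hI : I ∈ S) (hJ : J ∈ S) (h : I.2 < J.1) : I.2 + Δ ≤ J.1 := by
  obtain ⟨hw, hdisj, hgap⟩ := hG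
  obtain ⟨K, hK, hmin⟩ := Finset.exists_min_image (S.filter fun K => I.2 < K.1) Prod.fst
    ⟨J, Finset.mem_filter.2 ⟨hJ, h⟩⟩
  rw [Finset.mem_filter] at hK
  have hKeq : K.1 = I.2 + Δ := by
    apply hgap I hI K hK.1 hK.2
    rintro K' hK' ⟨h1, h2⟩
    have h3 := hmin K' (Finset.mem_filter.2 ⟨hK', h1⟩)
    have h4 := (hw K' hK').2.1
    omega
  have := hmin J (Finset.mem_filter.2 ⟨hJ, h⟩)
  omega

lemma mw_label {V : Type*} [DecidableEq V] {lab : Sym2 V → Finset ℕ} {Δ : ℕ}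
    {I : ℕ × ℕ} {M : Finset (Sym2 V × ℕ)}
    (h : IsTM (trestrict lab (Finset.Icc I.1 I.2)) Δ M) {p : Sym2 V × ℕ} (hp : p ∈ M) :
    IsTimeEdge lab p ∧ I.1 ≤ p.2 ∧ p.2 ≤ I.2 := by
  obtain ⟨h1, h2⟩ := h.1 p hp
  rw [trestrict] at h2
  rw [Finset.mem_inter, Finset.mem_Icc] at h2
  exact ⟨⟨h1, h2.1⟩, h2.2⟩

lemma mw_disjoint {V : Type*} [DecidableEq V] {lab : Sym2 V → Finset ℕ} {Δ T : ℕ}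
    {S : Finset (ℕ × ℕ)} (hG : GoodFamily Δ T S)
    {MW : ℕ × ℕ → Finset (Sym2 V × ℕ)}
    (hMW : ∀ I ∈ S, IsTM (trestrict lab (Finset.Icc I.1 I.2)) Δ (MW I))
    {I : ℕ × ℕ} (hI : I ∈ S) {J : ℕ × ℕ} (hJ : J ∈ S) (hne : I ≠ J) :
    Disjoint (MW I) (MW J) := by
  rw [Finset.disjoint_left]
  intro p hpI hpJ
  have h1 := (mw_label (hMW I hI) hpI).2
  have h2 := (mw_label (hMW J hJ) hpJ).2
  rcases hG.2.1 I hI J hJ hne with h | h <;> omega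

/-- The union of the matchings over a good family is a Δ-temporal matching. -/
lemma union_TM {V : Type*} [DecidableEq V]
    (lab : Sym2 V → Finset ℕ) (Δ T : ℕ) (S : Finset (ℕ × ℕ)) (hG : GoodFamily Δ T S)
    (MW : ℕ × ℕ → Finset (Sym2 V × ℕ))
    (hMW : ∀ I ∈ S, IsTM (trestrict lab (Finset.Icc I.1 I.2)) Δ (MW I)) :
    IsTM lab Δ (S.biUnion MW) := by
  constructor
  · intro p hp
    obtain ⟨I, hI, hpI⟩ := Finset.mem_biUnion.1 hp
    exact (mw_label (hMW I hI) hpI).1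
  · intro p hp q hq hne
    obtain ⟨I, hI, hpI⟩ := Finset.mem_biUnion.1 hp
    obtain ⟨J, hJ, hqJ⟩ := Finset.mem_biUnion.1 hq
    by_cases hIJ : I = J
    · subst hIJ
      exact (hMW I hI).2 p hpI q hqJ hne
    · right
      have h1 := (mw_label (hMW I hI) hpI).2
      have h2 := (mw_label (hMW J hJ) hqJ).2
      rcases hG.2.1 I hI J hJ hIJ with h | h
      · have := gap_lemma hG hI hJ h; omega
      · have := gap_lemma hG hJ hI h; omega

lemma tmu_set_nonempty {V : Type*} (lab : Sym2 V → Finset ℕ) (Δ : ℕ) :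
    {k | ∃ M : Finset (Sym2 V × ℕ), IsTM lab Δ M ∧ M.card = k}.Nonempty :=
  ⟨0, ∅, ⟨fun p hp => absurd hp (by simp), fun p hp => absurd hp (by simp)⟩, rfl⟩

lemma tmu_set_bdd {V : Type*} [Fintype V] [DecidableEq V] (lab : Sym2 V → Finset ℕ)
    (T Δ : ℕ) (hT : ∀ e, ∀ t ∈ lab e, 1 ≤ t ∧ t ≤ T) :
    BddAbove {k | ∃ M : Finset (Sym2 V × ℕ), IsTM lab Δ M ∧ M.card = k} := by
  refine ⟨((Finset.univ : Finset (Sym2 V)) ×ˢ Finset.Icc 1 T).card, ?_⟩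
  rintro k ⟨M, hM, rfl⟩
  apply Finset.card_le_card
  intro p hp
  obtain ⟨-, h2⟩ := hM.1 p hp
  rw [Finset.mem_product, Finset.mem_Icc]
  exact ⟨Finset.mem_univ _, hT p.1 p.2 h2⟩

/-- For a temporal graph of lifetime `T`, `Δ ≤ T`, a Δ-template `S`, and
any choice of a Δ-temporal matching `MW I` of `𝒢|_I` for each interval `I ∈ S`, the
union `⋃_{I ∈ S} MW I` is a Δ-temporal matching of 𝒢; in particular
`μ_Δ(𝒢) ≥ ∑_{I ∈ S} μ_Δ(𝒢|_I)`. -/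
theorem stmt12 {V : Type*} [Fintype V] [DecidableEq V]
    (lab : Sym2 V → Finset ℕ) (T Δ : ℕ) (hT : HasLifetime lab T) (hΔT : Δ ≤ T)
    (S : Finset (ℕ × ℕ)) (hS : IsTemplate Δ T S)
    (MW : ℕ × ℕ → Finset (Sym2 V × ℕ))
    (hMW : ∀ I ∈ S, IsTM (trestrict lab (Finset.Icc I.1 I.2)) Δ (MW I)) :
    IsTM lab Δ (S.biUnion MW) ∧
    ∑ I ∈ S, tmu (trestrict lab (Finset.Icc I.1 I.2)) Δ ≤ tmu lab Δ := by
  obtain ⟨hG, -⟩ := hS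
  have hTbd : ∀ (I : ℕ × ℕ), ∀ e, ∀ t ∈ trestrict lab (Finset.Icc I.1 I.2) e,
      1 ≤ t ∧ t ≤ T := by
    intro I e t ht
    rw [trestrict, Finset.mem_inter] at ht
    exact hT.1 e t ht.1
  refine ⟨union_TM lab Δ T S hG MW hMW, ?_⟩
  -- choose an optimal matching for each interval
  have hopt : ∀ I : ℕ × ℕ, ∃ M : Finset (Sym2 V × ℕ),
      IsTM (trestrict lab (Finset.Icc I.1 I.2)) Δ M ∧
      M.card = tmu (trestrict lab (Finset.Icc I.1 I.2)) Δ := by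
    intro I
    have := Nat.sSup_mem (tmu_set_nonempty (trestrict lab (Finset.Icc I.1 I.2)) Δ)
      (tmu_set_bdd (trestrict lab (Finset.Icc I.1 I.2)) T Δ (hTbd I))
    obtain ⟨M, hM, hMc⟩ := this
    exact ⟨M, hM, hMc⟩
  choose MW' hMW'1 hMW'2 using hopt
  have hMW'S : ∀ I ∈ S, IsTM (trestrict lab (Finset.Icc I.1 I.2)) Δ (MW' I) :=
    fun I _ => hMW'1 I
  have hcard : (S.biUnion MW').card = ∑ I ∈ S, tmu (trestrict lab (Finset.Icc I.1 I.2)) Δ := by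
    rw [Finset.card_biUnion (fun I hI J hJ hne => mw_disjoint hG hMW'S hI hJ hne)]
    exact Finset.sum_congr rfl fun I _ => hMW'2 I
  have hmem : ∑ I ∈ S, tmu (trestrict lab (Finset.Icc I.1 I.2)) Δ ∈
      {k | ∃ M : Finset (Sym2 V × ℕ), IsTM lab Δ M ∧ M.card = k} :=
    ⟨S.biUnion MW', union_TM lab Δ T S hG MW' hMW'S, hcard⟩
  exact le_csSup (tmu_set_bdd lab T Δ hT.1) hmem
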